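/- Let b : ℝ → ℝ be continuously differentiable with b' ≥ 0 everywhere, and let φ denote the flow of the ODE ż = b(z). Let w : [s,t] → ℝ be continuous with w_s = 0 and sup_{r∈[s,t]} |w_r| ≤ w̄. If X satisfies X_u = X_s + ∫_s^u b(X_r) dr + w_u for all u ∈ [s,t], then φ(X_s − w̄, u − s) ≤ X_u ≤ φ(X_s + w̄, u − s) for all u ∈ [s,t]. -/

import Mathlib

open Set intervalIntegral

private lemma aux_upper (b : ℝ → ℝ) (hb : ContDiff ℝ 1 b) (hb' : ∀ x, 0 ≤ deriv b x)
    (φ : ℝ → ℝ → ℝ)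
    (hφ0 : ∀ x : ℝ, φ x 0 = x)
    (hφ' : ∀ x h : ℝ, 0 ≤ h → HasDerivAt (φ x) (b (φ x h)) h)
    (s t wbar : ℝ) (hst : s ≤ t)
    (w X : ℝ → ℝ)
    (hwbd : ∀ r ∈ Set.Icc s t, w r ≤ wbar)
    (hX : ContinuousOn X (Set.Icc s t))
    (hXeq : ∀ u ∈ Set.Icc s t, X u = X s + (∫ r in s..u, b (X r)) + w u) :
    ∀ u ∈ Set.Icc s t, X u ≤ φ (X s + wbar) (u - s) := by
  set c := X s + wbar with hc
  -- clamp functions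
  set cl : ℝ → ℝ := fun r => max s (min r t) with hcl
  have hcl_cont : Continuous cl := continuous_const.max (continuous_id.min continuous_const)
  have hcl_mem : ∀ r, cl r ∈ Icc s t := fun r =>
    ⟨le_max_left _ _, max_le hst (min_le_right _ _)⟩
  have hcl_eq : ∀ r ∈ Icc s t, cl r = r := fun r hr => by
    simp [hcl, min_eq_left hr.2, max_eq_right hr.1]
  set Xc : ℝ → ℝ := fun r => X (cl r) with hXc
  have hXc_cont : Continuous Xc := hX.comp_continuous hcl_cont hcl_mem
  have hXc_eq : ∀ r ∈ Icc s t, Xc r = X r := fun r hr => by rw [hXc]; simp [hcl_eq r hr]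
  -- flow continuity on Ici 0
  have hφcont : ContinuousOn (φ c) (Ici 0) := fun h hh =>
    ((hφ' c h hh).continuousAt).continuousWithinAt
  set Yc : ℝ → ℝ := fun r => φ c (max (r - s) 0) with hYc
  have hYc_cont : Continuous Yc :=
    hφcont.comp_continuous ((continuous_id.sub continuous_const).max continuous_const)
      (fun r => Set.mem_Ici.2 (le_max_right _ _))
  have hYc_eq : ∀ r, s ≤ r → Yc r = φ c (r - s) := fun r hr => by
    rw [hYc]; simp [max_eq_left (sub_nonneg.2 hr)]
  -- derivative of the flow shifted
  have hYderiv : ∀ u, s ≤ u → HasDerivAt (fun v => φ c (v - s)) (b (φ c (u - s))) u := by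
    intro u hu
    have h1 : HasDerivAt (fun v : ℝ => v - s) 1 u := (hasDerivAt_id u).sub_const s
    have := (hφ' c (u - s) (sub_nonneg.2 hu)).comp u h1
    simp only [mul_one] at this; exact this
  -- integral identity for the flow
  have key : ∀ u ∈ Icc s t, (∫ r in s..u, b (Yc r)) = Yc u - c := by
    intro u hu
    have hsu : s ≤ u := hu.1
    have hcongr : ∀ r ∈ uIcc s u, b (Yc r) = b (φ c (r - s)) := by
      intro r hr
      rw [uIcc_of_le hsu] at hr
      rw [hYc_eq r hr.1]
    rw [integral_congr hcongr]
    have h1 : ∀ r ∈ uIcc s u, HasDerivAt (fun v => φ c (v - s)) (b (φ c (r - s))) r := by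
      intro r hr
      rw [uIcc_of_le hsu] at hr
      exact hYderiv r hr.1
    have h2 : IntervalIntegrable (fun r => b (φ c (r - s))) MeasureTheory.volume s u := by
      have : ContinuousOn (fun r => b (φ c (r - s))) (uIcc s u) := by
        apply ((hb.continuous.comp hYc_cont).continuousOn).congr
        intro r hr
        rw [uIcc_of_le hsu] at hr
        simp [Function.comp, hYc_eq r hr.1]
      exact this.intervalIntegrable
    rw [integral_eq_sub_of_hasDerivAt h1 h2, sub_self, hφ0, hYc_eq u hsu]
  -- bounds
  obtain ⟨M1, hM1⟩ := isCompact_Icc.exists_bound_of_continuousOn hX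
  obtain ⟨M2, hM2⟩ := isCompact_Icc.exists_bound_of_continuousOn
    (hYc_cont.continuousOn : ContinuousOn Yc (Icc s t))
  set M : ℝ := max M1 M2 with hM
  have hXM : ∀ r ∈ Icc s t, X r ∈ Icc (-M) M := by
    intro r hr
    have := hM1 r hr
    rw [Real.norm_eq_abs, abs_le] at this
    constructor <;> [linarith [this.1, le_max_left M1 M2]; linarith [this.2, le_max_left M1 M2]]
  have hYM : ∀ r ∈ Icc s t, Yc r ∈ Icc (-M) M := by
    intro r hr
    have := hM2 r hr
    rw [Real.norm_eq_abs, abs_le] at this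
    constructor <;> [linarith [this.1, le_max_right M1 M2]; linarith [this.2, le_max_right M1 M2]]
  -- Lipschitz constant
  have hderivb_cont : Continuous (deriv b) := hb.continuous_deriv le_rfl
  obtain ⟨L0, hL0⟩ := (isCompact_Icc : IsCompact (Icc (-M) M)).exists_bound_of_continuousOn
    hderivb_cont.continuousOn
  set L : ℝ := max L0 0 with hL
  have hLnn : 0 ≤ L := le_max_right _ _
  have hlip : ∀ x ∈ Icc (-M) M, ∀ y ∈ Icc (-M) M, |b x - b y| ≤ L * |x - y| := by
    intro x hx y hy
    have := Convex.norm_image_sub_le_of_norm_deriv_le (C := L)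
      (fun z _ => hb.differentiable one_ne_zero z)
      (fun z hz => le_trans (hL0 z hz) (le_max_left _ _)) (convex_Icc _ _) hy hx
    simpa [Real.norm_eq_abs] using this
  have hmono : Monotone b := monotone_of_deriv_nonneg (hb.differentiable one_ne_zero) hb'
  -- the Gronwall setup
  set Z : ℝ → ℝ := fun r => max (Xc r - Yc r) 0 with hZ
  have hZ_cont : Continuous Z := (hXc_cont.sub hYc_cont).max continuous_const
  have hZnn : ∀ r, 0 ≤ Z r := fun r => le_max_right _ _
  set q : ℝ → ℝ := fun r => L * Z r with hq
  have hq_cont : Continuous q := continuous_const.mul hZ_cont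
  have hqnn : ∀ r, 0 ≤ q r := fun r => mul_nonneg hLnn (hZnn r)
  set g : ℝ → ℝ := fun u => ∫ r in s..u, q r with hg
  have hptwise : ∀ r ∈ Icc s t, b (X r) - b (Yc r) ≤ q r := by
    intro r hr
    rcases le_or_gt (X r) (Yc r) with h | h
    · have : b (X r) ≤ b (Yc r) := hmono h
      have := hqnn r
      linarith
    · have habs := hlip (X r) (hXM r hr) (Yc r) (hYM r hr)
      have h1 : b (X r) - b (Yc r) ≤ |b (X r) - b (Yc r)| := le_abs_self _
      have h2 : |X r - Yc r| = X r - Yc r := abs_of_pos (by linarith)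
      have h3 : Z r = X r - Yc r := by
        rw [hZ]; simp only [hXc_eq r hr]; exact max_eq_left (by linarith)
      show b (X r) - b (Yc r) ≤ L * Z r
      rw [h3]
      calc b (X r) - b (Yc r) ≤ L * |X r - Yc r| := le_trans h1 habs
        _ = L * (X r - Yc r) := by rw [h2]
  -- integral inequality Z ≤ g on Icc s t
  have hbX_int : ∀ u ∈ Icc s t, IntervalIntegrable (fun r => b (X r)) MeasureTheory.volume s u := by
    intro u hu
    have : ContinuousOn (fun r => b (X r)) (uIcc s u) := by
      rw [uIcc_of_le hu.1]
      exact (hb.continuous.comp_continuousOn (hX.mono (Icc_subset_Icc le_rfl hu.2)))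
    exact this.intervalIntegrable
  have hbY_int : ∀ u : ℝ, IntervalIntegrable (fun r => b (Yc r)) MeasureTheory.volume s u :=
    fun u => (hb.continuous.comp hYc_cont).intervalIntegrable s u
  have hZle : ∀ u ∈ Icc s t, Z u ≤ g u := by
    intro u hu
    have hsu : s ≤ u := hu.1
    have hXY : X u - Yc u ≤ g u := by
      have hYu : Yc u = c + ∫ r in s..u, b (Yc r) := by
        rw [key u hu]; ring
      rw [hXeq u hu, hYu]
      have hsub : (∫ r in s..u, b (X r)) - (∫ r in s..u, b (Yc r))
          = ∫ r in s..u, (b (X r) - b (Yc r)) :=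
        (integral_sub (hbX_int u hu) (hbY_int u)).symm
      have hmonoint : (∫ r in s..u, (b (X r) - b (Yc r))) ≤ ∫ r in s..u, q r := by
        apply integral_mono_on hsu ((hbX_int u hu).sub (hbY_int u)) (hq_cont.intervalIntegrable s u)
        intro r hr
        exact hptwise r ⟨hr.1, le_trans hr.2 hu.2⟩
      have hwu : w u ≤ wbar := hwbd u hu
      have : (∫ r in s..u, (b (X r) - b (Yc r))) ≤ g u := hmonoint
      rw [hc]
      linarith [hsub ▸ this]
    have hg0 : 0 ≤ g u := integral_nonneg hsu (fun r _ => hqnn r)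
    rw [hZ]
    have : Xc u - Yc u ≤ g u := by rw [hXc_eq u hu]; exact hXY
    exact max_le this hg0
  -- derivative of g
  have hgderiv : ∀ u : ℝ, HasDerivAt g (q u) u := fun u =>
    (hq_cont.integral_hasStrictDerivAt s u).hasDerivAt
  -- exponential trick
  set E : ℝ → ℝ := fun u => Real.exp (-L * (u - s)) with hE
  have hEpos : ∀ u, 0 < E u := fun u => Real.exp_pos _
  have hEderiv : ∀ u : ℝ, HasDerivAt E (E u * (-L)) u := by
    intro u
    have h1 : HasDerivAt (fun v : ℝ => -L * (v - s)) (-L) u := by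
      simpa using ((hasDerivAt_id u).sub_const s).const_mul (-L)
    exact h1.exp
  set h : ℝ → ℝ := fun u => g u * E u with hh
  have hhderiv : ∀ u : ℝ, HasDerivAt h (q u * E u + g u * (E u * (-L))) u := fun u =>
    (hgderiv u).mul (hEderiv u)
  have hanti : AntitoneOn h (Icc s t) := by
    apply antitoneOn_of_deriv_nonpos (convex_Icc s t)
    · exact (continuous_iff_continuousAt.2
        fun u => (hhderiv u).differentiableAt.continuousAt).continuousOn
    · intro u hu
      exact (hhderiv u).differentiableAt.differentiableWithinAt
    · intro u hu
      rw [interior_Icc] at hu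
      rw [(hhderiv u).deriv]
      have hZg : Z u ≤ g u := hZle u ⟨le_of_lt hu.1, le_of_lt hu.2⟩
      have : q u ≤ L * g u := by
        rw [hq]
        exact mul_le_mul_of_nonneg_left hZg hLnn
      nlinarith [hEpos u]
  intro u hu
  have hgs : g s = 0 := integral_same
  have hhs : h s = 0 := by rw [hh]; simp [hgs]
  have : h u ≤ h s := hanti (left_mem_Icc.2 hst) hu hu.1
  rw [hhs] at this
  have hgle : g u ≤ 0 := by
    have := (mul_nonpos_iff.1 this)
    rcases this with ⟨h1, h2⟩ | ⟨h1, h2⟩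
    · linarith [hEpos u]
    · exact h1
  have hZu : Z u ≤ 0 := le_trans (hZle u hu) hgle
  have : Xc u - Yc u ≤ Z u := le_max_left _ _
  rw [hXc_eq u hu, hYc_eq u hu.1] at this
  linarith

theorem stmt_9 (b : ℝ → ℝ) (hb : ContDiff ℝ 1 b) (hb' : ∀ x, 0 ≤ deriv b x)
    (φ : ℝ → ℝ → ℝ)
    (hφ0 : ∀ x : ℝ, φ x 0 = x)
    (hφ' : ∀ x h : ℝ, 0 ≤ h → HasDerivAt (φ x) (b (φ x h)) h)
    (s t wbar : ℝ) (hst : s < t) (hwbar : 0 < wbar)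
    (w X : ℝ → ℝ)
    (hw : ContinuousOn w (Set.Icc s t)) (hws : w s = 0)
    (hwbd : ∀ r ∈ Set.Icc s t, |w r| ≤ wbar)
    (hX : ContinuousOn X (Set.Icc s t))
    (hXeq : ∀ u ∈ Set.Icc s t, X u = X s + (∫ r in s..u, b (X r)) + w u) :
    ∀ u ∈ Set.Icc s t,
      φ (X s - wbar) (u - s) ≤ X u ∧ X u ≤ φ (X s + wbar) (u - s) := by
  intro u hu
  constructor
  · -- lower bound via reflection
    have hbt : ContDiff ℝ 1 (fun x => -b (-x)) := (hb.comp contDiff_neg).neg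
    have hbt' : ∀ x, 0 ≤ deriv (fun x => -b (-x)) x := by
      intro x
      have h2 : HasDerivAt (fun x : ℝ => b (-x)) (deriv b (-x) * (-1)) x :=
        ((hb.differentiable one_ne_zero (-x)).hasDerivAt).comp x (hasDerivAt_neg x)
      have h1 : HasDerivAt (fun x : ℝ => -b (-x)) (deriv b (-x)) x := by
        have h3 := h2.neg; simp only [mul_neg, mul_one, neg_neg] at h3; exact h3
      rw [h1.deriv]; exact hb' (-x)
    have hXeq' : ∀ u ∈ Set.Icc s t,
        (-X u) = (-X s) + (∫ r in s..u, -b (-(-X r))) + (-w u) := by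
      intro u hu
      have h3 := hXeq u hu
      have h4 : (∫ r in s..u, -b (-(-X r))) = -(∫ r in s..u, b (X r)) := by
        simp only [neg_neg]
        exact intervalIntegral.integral_neg
      rw [h4]; linarith
    have := aux_upper (fun x => -b (-x)) hbt hbt' (fun x h => -φ (-x) h)
      (fun x => by simp [hφ0])
      (fun x h hh => by have h1 := (hφ' (-x) h hh).neg; simp only [neg_neg]; exact h1)
      s t wbar hst.le (fun r => -w r) (fun r => -X r)
      (fun r hr => by show -w r ≤ wbar; linarith [(abs_le.1 (hwbd r hr)).1])
      hX.neg hXeq' u hu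
    have harg : -(-X s + wbar) = X s - wbar := by ring
    rw [harg] at this
    linarith
  · exact aux_upper b hb hb' φ hφ0 hφ' s t wbar hst.le w X
      (fun r hr => (abs_le.1 (hwbd r hr)).2) hX hXeq u hu
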